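/- For every k > 0, let G_k = ({X_0, …, X_k}, {a}, Δ_k) be the grammar with productions Δ_k = { X_i → X_{i−1} X_{i−1} | 1 ≤ i ≤ k } ∪ { X_0 → a }. Then every bounded expression Γ = γ_1* … γ_n* over Δ_k satisfying L_{X_k}(G_k) = L̂_{X_k}(Γ ∩ Γ^{df(k+1)}_{X_k}(G_k), G_k) has size |Γ| = Σ_{i=1}^n |γ_i| ≥ 2^{k−1}. -/

import Mathlib

namespace Paper

/-- A word over nonterminals `N` and terminals `T`. -/
abbrev Word (N T : Type) := List (N ⊕ T)

/-- A production of a grammar. -/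
abbrev CProd (N T : Type) := N × Word N T

/-- A grammar, given by its set of productions. -/
structure CFG (N T : Type) where
  prods : Set (CProd N T)

variable {N T : Type}

/-- number of occurrences of nonterminals in a word -/
def ntCount (u : Word N T) : ℕ := (u.filter (fun s => s.isLeft)).length

/-- number of occurrences of terminals in a word -/
def tCount (u : Word N T) : ℕ := (u.filter (fun s => s.isRight)).length

/-- the result of applying production `p` at position `j` of `u` -/
def applyProd (p : CProd N T) (j : ℕ) (u : Word N T) : Word N T :=
  u.take j ++ p.2 ++ u.drop (j + 1)

/-- `KSeq G k u γjs v`: a step sequence from `u` to `v` applying the indicated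
productions at the indicated positions, in which every word (including `u`, `v`)
has at most `k` occurrences of nonterminals (`k = ⊤` places no restriction). -/
inductive KSeq (G : CFG N T) (k : ℕ∞) : Word N T → List (CProd N T × ℕ) → Word N T → Prop
  | refl (u : Word N T) : (ntCount u : ℕ∞) ≤ k → KSeq G k u [] u
  | step {u v : Word N T} {p : CProd N T} {j : ℕ} {rest : List (CProd N T × ℕ)} :
      (ntCount u : ℕ∞) ≤ k → p ∈ G.prods → u[j]? = some (Sum.inl p.1) →
      KSeq G k (applyProd p j u) rest v → KSeq G k u ((p, j) :: rest) v

/-- words annotated with the index of the step at which each symbol occurrence appeared -/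
abbrev AWord (N T : Type) := List ((N ⊕ T) × ℕ)

def strip (u : AWord N T) : Word N T := u.map Prod.fst

def ntCountA (u : AWord N T) : ℕ := (u.filter (fun s => s.1.isLeft)).length

def applyProdA (p : CProd N T) (j m : ℕ) (u : AWord N T) : AWord N T :=
  u.take j ++ p.2.map (fun s => (s, m)) ++ u.drop (j + 1)

/-- the depth-first condition: position `j` carries a maximal first-appearance
index among the nonterminal occurrences of `u` -/
def dfOK (u : AWord N T) (j : ℕ) : Prop :=
  ∀ i x o, u[(i : ℕ)]? = some (Sum.inl x, o) → ∀ s oj, u[j]? = some (s, oj) → o ≤ oj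

/-- `DFSeq G k m u γjs v`: a `k`-index depth-first step sequence on annotated words,
where `m` is the index (in the whole sequence) of the current word `u`. -/
inductive DFSeq (G : CFG N T) (k : ℕ∞) : ℕ → AWord N T → List (CProd N T × ℕ) → AWord N T → Prop
  | refl (m : ℕ) (u : AWord N T) : (ntCountA u : ℕ∞) ≤ k → DFSeq G k m u [] u
  | step {m : ℕ} {u v : AWord N T} {p : CProd N T} {j o : ℕ} {rest : List (CProd N T × ℕ)} :
      (ntCountA u : ℕ∞) ≤ k → p ∈ G.prods → u[j]? = some (Sum.inl p.1, o) →
      dfOK u j →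
      DFSeq G k (m + 1) (applyProdA p j (m + 1) u) rest v →
      DFSeq G k m u ((p, j) :: rest) v

/-- `u ⇒^γ v` by a `k`-index step sequence (positions existentially quantified). -/
def CtrlSeq (G : CFG N T) (k : ℕ∞) (u : Word N T) (γ : List (CProd N T)) (v : Word N T) : Prop :=
  ∃ js : List ℕ, js.length = γ.length ∧ KSeq G k u (γ.zip js) v

/-- annotate a word as an initial word of a step sequence -/
def annot (u : Word N T) : AWord N T := u.map (fun s => (s, 0))

/-- `u ⇒^γ v` by a `k`-index depth-first step sequence starting at `u`. -/
def DFCtrlFrom (G : CFG N T) (k : ℕ∞) (u : Word N T) (γ : List (CProd N T)) (v : Word N T) :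
    Prop :=
  ∃ (js : List ℕ) (va : AWord N T),
    js.length = γ.length ∧ DFSeq G k 0 (annot u) (γ.zip js) va ∧ strip va = v

/-- embedding of terminal words -/
def tw (w : List T) : Word N T := w.map Sum.inr

/-- the sentential word `u Y v` where `u, v` are terminal and `Y` is an optional nonterminal -/
def sent (u : List T) (Y : Option N) (v : List T) : Word N T :=
  tw u ++ (Y.elim [] (fun y => [Sum.inl y])) ++ tw v

/-- `L^{(k)}_{X,Y}(G) = { u·v | X ⇒* u Y v by a k-index step sequence }`;
`Y = none` stands for `ε`. -/
def LKY (G : CFG N T) (k : ℕ∞) (X : N) (Y : Option N) : Set (List T) :=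
  {w | ∃ u v γ, w = u ++ v ∧ CtrlSeq G k [Sum.inl X] γ (sent u Y v)}

/-- `L_X(G)` -/
def Lang (G : CFG N T) (X : N) : Set (List T) := LKY G ⊤ X none

/-- `L^{(k)}_X(G)` -/
def LangK (G : CFG N T) (k : ℕ) (X : N) : Set (List T) := LKY G (k : ℕ∞) X none

/-- `Γ^{df(k)}_{X,Y}(G)`: control words of `k`-index depth-first step sequences `X ⇒^γ u Y v`. -/
def GammaDF (G : CFG N T) (k : ℕ) (X : N) (Y : Option N) : Set (List (CProd N T)) :=
  {γ | ∃ u v : List T, DFCtrlFrom G (k : ℕ∞) [Sum.inl X] γ (sent u Y v)}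

/-- `L̂_{X,Y}(Γ, G)` -/
def LHat (G : CFG N T) (Γ : Set (List (CProd N T))) (X : N) (Y : Option N) : Set (List T) :=
  {w | ∃ u v, w = u ++ v ∧ ∃ γ ∈ Γ, CtrlSeq G ⊤ [Sum.inl X] γ (sent u Y v)}

/-- the language of the bounded expression `w₁* ⋯ w_d*` -/
def BLang {α : Type} : List (List α) → Set (List α)
  | [] => {[]}
  | w :: ws => {u | ∃ (n : ℕ) (v : List α), v ∈ BLang ws ∧ u = (List.replicate n w).flatten ++ v}

/-- the words of a bounded expression must be nonempty -/
def IsBExpr {α : Type} (ws : List (List α)) : Prop := ∀ w ∈ ws, w ≠ []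

/-- the language of the letter-bounded expression `a₁* ⋯ a_d*` -/
def letterLang {α : Type} (as : List α) : Set (List α) := BLang (as.map (fun a => [a]))

/-- the language `a_i* ⋯ a_j*` (0-indexed segment of `as` from `i` to `j` inclusive) -/
def segLang {α : Type} (as : List α) (i j : ℕ) : Set (List α) :=
  letterLang ((as.drop i).take (j - i + 1))

end Paper

namespace Paper

variable {N T : Type}

/-- ranked words over the nonterminals -/
abbrev RW (N : Type) := List (N × ℕ)

/-- the set of rank values is downward closed (equivalently, of the form `{0, …, m}`
when nonempty) -/
def contiguousRanks (q : RW N) : Prop := ∀ p ∈ q, ∀ j ≤ p.2, ∃ x : N, (x, j) ∈ q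

/-- vertices of the graph `A^{df(k)}_G` -/
def IsVertex (k : ℕ) (q : RW N) : Prop :=
  q.length ≤ k ∧ contiguousRanks q ∧ List.Pairwise (· ≤ ·) (q.map Prod.snd)

/-- `w↓Ξ` : projection of a word to its nonterminals -/
def ntProj (w : Word N T) : List N := w.filterMap Sum.getLeft?

open Classical in
/-- the rank given to the nonterminals produced by a step rewriting a nonterminal
of maximal rank `i`, where `uv` is the rest of the ranked word -/
noncomputable def newRank (uv : RW N) (i : ℕ) : ℕ :=
  if uv = [] then 0 else if ∀ p ∈ uv, p.2 ≠ i then i else i + 1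

/-- the edge relation of the graph `A^{df(k)}_G` -/
def Edge (G : CFG N T) (k : ℕ) (q : RW N) (p : CProd N T) (q' : RW N) : Prop :=
  p ∈ G.prods ∧ IsVertex k q ∧ IsVertex k q' ∧
  ∃ (u v : RW N) (i : ℕ), q = u ++ [(p.1, i)] ++ v ∧ (∀ x ∈ q, x.2 ≤ i) ∧
    q' = u ++ v ++ (ntProj p.2).map (fun X => (X, newRank (u ++ v) i))

/-- paths in a labeled graph, recording the sequence of edge labels -/
inductive GPath {V E : Type} (edge : V → E → V → Prop) : V → List E → V → Prop
  | refl (v : V) : GPath edge v [] v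
  | step {v v' v'' : V} {e : E} {es : List E} :
      edge v e v' → GPath edge v' es v'' → GPath edge v (e :: es) v''

/-- paths recording the successive vertices as well -/
inductive VPath {V E : Type} (edge : V → E → V → Prop) : V → List (E × V) → Prop
  | refl (v : V) : VPath edge v []
  | step {v v' : V} {e : E} {rest : List (E × V)} :
      edge v e v' → VPath edge v' rest → VPath edge v ((e, v') :: rest)

/-- endpoint of a path starting at `q` -/
def pend {V E : Type} (q : V) (π : List (E × V)) : V := (π.map Prod.snd).getLastD q

/-- a path is acyclic iff it visits no vertex twice -/
def AcyclicFrom {V E : Type} (q : V) (π : List (E × V)) : Prop :=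
  (q :: π.map Prod.snd).Nodup

/-- `Decomp edge q pairs fin` asserts that the path obtained by concatenating, in order,
the segments of `pairs` (each an acyclic segment followed by a cycle) and `fin` is a valid
path from `q`, alternating acyclic segments `ς_j` and cycles `θ_j`. -/
def Decomp {V E : Type} (edge : V → E → V → Prop) :
    V → List (List (E × V) × List (E × V)) → List (E × V) → Prop
  | q, [], fin => VPath edge q fin ∧ AcyclicFrom q fin
  | q, (σ, θ) :: rest, fin =>
      VPath edge q σ ∧ AcyclicFrom q σ ∧
      VPath edge (pend q σ) θ ∧ pend (pend q σ) θ = pend q σ ∧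
      Decomp edge (pend q σ) rest fin

/-- `|γ|_a`: total number of occurrences of the terminal `a` in the right-hand
sides of the productions of the control word `γ` -/
def projCnt {A : Type} [DecidableEq A] (γ : List (CProd N A)) (a : A) : ℕ :=
  ((γ.map (fun p => p.2)).flatten.filterMap Sum.getRight?).count a

/-- `proj(γ) = a₁^{|γ|_{a₁}} ⋯ a_s^{|γ|_{a_s}}` -/
def projW {A : Type} [DecidableEq A] (as : List A) (γ : List (CProd N A)) : List A :=
  (as.map (fun a => List.replicate (projCnt γ a) a)).flatten

end Paper

namespace Paper

variable {N T : Type}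

/-- a grammar is in 2-normal form -/
def TwoNF (G : CFG N T) : Prop := ∀ p ∈ G.prods, p.2.length ≤ 2

/-- states of the automaton/grammar `G^b`: `(s, i)` encodes `q^{(s+1)}_{i+1}`,
i.e. position `i` (0-indexed) inside the block `s` (0-indexed) -/
abbrev QB : Type := ℕ × ℕ

/-- `ℓ_s`: length of the `s`-th word of the bounded expression -/
def lenB (ws : List (List T)) (s : ℕ) : ℕ := (ws.getD s []).length

/-- the `i`-th letter of the `s`-th word -/
def letterB (ws : List (List T)) (s i : ℕ) : Option T := (ws.getD s [])[i]?

/-- the productions of the grammar `G^b` generating the bounded expression `b` -/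
def DeltaB (ws : List (List T)) : Set (CProd QB T) :=
  {p | (∃ s i a, s < ws.length ∧ i + 1 < lenB ws s ∧ letterB ws s i = some a ∧
          p = ((s, i), [Sum.inr a, Sum.inl (s, i + 1)]))
     ∨ (∃ s s' a, s ≤ s' ∧ s' < ws.length ∧
          letterB ws s (lenB ws s - 1) = some a ∧
          p = ((s, lenB ws s - 1), [Sum.inr a, Sum.inl (s', 0)]))
     ∨ (∃ s, s < ws.length ∧ p = ((s, 0), ([] : Word QB T)))}

/-- the grammar `G^b` -/
def GB (ws : List (List T)) : CFG QB T := ⟨DeltaB ws⟩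

/-- nonterminals `[q X q']` of the product grammar `G^∩` -/
abbrev NI (N : Type) : Type := QB × N × QB

/-- `q ∈ Ξ^b` -/
def ValidQ (ws : List (List T)) (q : QB) : Prop :=
  q.1 < ws.length ∧ q.2 < lenB ws q.1

/-- `[q X q'] ∈ Ξ^∩`: both states valid and blocks in order -/
def ValidNI (ws : List (List T)) (n : NI N) : Prop :=
  ValidQ ws n.1 ∧ ValidQ ws n.2.2 ∧ n.1.1 ≤ n.2.2.1

/-- `q ⇒* w·q'` in `G^b` -/
def DerB (ws : List (List T)) (q : QB) (w : List T) (q' : QB) : Prop :=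
  ∃ γ, CtrlSeq (GB ws) ⊤ [Sum.inl q] γ (tw w ++ [Sum.inl q'])

/-- the productions `Δ^∩` of the product grammar `G^∩` -/
def DeltaI (G : CFG N T) (ws : List (List T)) : Set (CProd (NI N) T) :=
  {pp | ∃ (q q' : QB) (X : N), ValidNI ws (q, X, q') ∧
     ((∃ w : List T, (X, tw w) ∈ G.prods ∧ DerB ws q w q' ∧
         pp = ((q, X, q'), tw w)) ∨
      (∃ Y : N, (X, [Sum.inl Y]) ∈ G.prods ∧
         pp = ((q, X, q'), [Sum.inl ((q, Y, q') : NI N)])) ∨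
      (∃ (a : T) (Y : N) (qm : QB), (X, [Sum.inr a, Sum.inl Y]) ∈ G.prods ∧
         ((q, [Sum.inr a, Sum.inl qm]) : CProd QB T) ∈ DeltaB ws ∧ ValidNI ws (qm, Y, q') ∧
         pp = ((q, X, q'), [Sum.inr a, Sum.inl ((qm, Y, q') : NI N)])) ∨
      (∃ (a : T) (Y : N) (qm : QB), (X, [Sum.inl Y, Sum.inr a]) ∈ G.prods ∧
         ((qm, [Sum.inr a, Sum.inl q']) : CProd QB T) ∈ DeltaB ws ∧ ValidNI ws (q, Y, qm) ∧
         pp = ((q, X, q'), [Sum.inl ((q, Y, qm) : NI N), Sum.inr a])) ∨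
      (∃ (Y Z : N) (qm : QB), (X, [Sum.inl Y, Sum.inl Z]) ∈ G.prods ∧
         ValidNI ws (q, Y, qm) ∧ ValidNI ws (qm, Z, q') ∧
         pp = ((q, X, q'), [Sum.inl ((q, Y, qm) : NI N), Sum.inl ((qm, Z, q') : NI N)])))}

/-- the product grammar `G^∩` -/
def GI (G : CFG N T) (ws : List (List T)) : CFG (NI N) T := ⟨DeltaI G ws⟩

/-- `ζ` on symbols -/
def zetaS : (NI N ⊕ T) → (N ⊕ T) := Sum.map (fun n => n.2.1) id

/-- `ζ` on productions -/
def zetaP (p : CProd (NI N) T) : CProd N T := (p.1.2.1, p.2.map zetaS)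

/-- `ζ` on control words -/
def zetaC (γ : List (CProd (NI N) T)) : List (CProd N T) := γ.map zetaP

/-- the intermediate state of the (unique, shortest) two-step run of `G^b` from the
left state of `h` to its right state; when the first step wraps, the least possible
intermediate block is chosen -/
noncomputable def iotaMid (ws : List (List T)) (h : NI N) (a b : T) : QB :=
  if h.1.2 + 1 < lenB ws h.1.1 then (h.1.1, h.1.2 + 1)
  else (sInf {y : ℕ | (((h.1.1, h.1.2), [Sum.inr a, Sum.inl ((y, 0) : QB)]) : CProd QB T) ∈ DeltaB ws ∧
                (((y, 0), [Sum.inr b, Sum.inl (h.2.2 : QB)]) : CProd QB T) ∈ DeltaB ws}, 0)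

/-- `ι` on right-hand sides: relabels terminals by the indices (0-indexed) of the
blocks of `b` completed by the corresponding moves of `G^b`; `h` is the head of the
production -/
noncomputable def iotaRhs (ws : List (List T)) (h : NI N) :
    Word (NI N) T → Word (NI N) ℕ
  | [] => []
  | [Sum.inr _] => if h.2.2.2 = 0 then [Sum.inr h.1.1] else []
  | [Sum.inr a, Sum.inr b] =>
      (if (iotaMid ws h a b).2 = 0 then [Sum.inr h.1.1] else []) ++
      (if h.2.2.2 = 0 then [Sum.inr (iotaMid ws h a b).1] else [])
  | [Sum.inr _, Sum.inl m] => (if m.1.2 = 0 then [Sum.inr h.1.1] else []) ++ [Sum.inl m]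
  | [Sum.inl m, Sum.inr _] => [Sum.inl m] ++ (if h.2.2.2 = 0 then [Sum.inr m.2.2.1] else [])
  | other => other.map (Sum.map id (fun _ => 0))

/-- the map `ι : Δ^∩ → Δ^⋈` -/
noncomputable def iota (ws : List (List T)) (p : CProd (NI N) T) : CProd (NI N) ℕ :=
  (p.1, iotaRhs ws p.1 p.2)

/-- the grammar `G^⋈`, whose terminals are the (0-indexed) letters `a₁, …, a_d`
represented by natural numbers -/
noncomputable def GBow (G : CFG N T) (ws : List (List T)) : CFG (NI N) ℕ :=
  ⟨iota ws '' DeltaI G ws⟩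

end Paper

namespace Paper

variable {N A : Type}

/-- `Ξ̂`: nonterminals producing some word starting with `a₁` and some word ending
with `a_d` -/
def XiHat (G : CFG N A) (a1 ad : A) : Set N :=
  {Y | (∃ w ∈ Lang G Y, ∃ v, w = a1 :: v) ∧ (∃ w ∈ Lang G Y, ∃ v, w = v ++ [ad])}

/-- the grammar `G^♯` (here `S = Ξ̂`, and `Ξ̌` is its complement) -/
def GSharp (G : CFG N A) (S : Set N) : CFG N A :=
  ⟨{p | p ∈ G.prods ∧ p.1 ∉ S} ∪
   {p | p ∈ G.prods ∧ p.1 ∈ S ∧ ∃ (u : Word N A) (Xr : N) (v : Word N A),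
      Xr ∈ S ∧ p.2 = u ++ [Sum.inl Xr] ++ v}⟩

/-- the grammar `G_{i,w}` for a pivot production `piv` (here `S = Ξ̂`) -/
def GPivot (G : CFG N A) (S : Set N) (piv : CProd N A) : CFG N A :=
  ⟨{p | p ∈ G.prods ∧ p.1 ∉ S} ∪ {piv}⟩

/-- `G` is reduced for `X` -/
def Reduced (G : CFG N A) (X : N) : Prop :=
  ∀ Y : N, Y ≠ X → (LKY G ⊤ X (some Y)).Nonempty ∧ (Lang G Y).Nonempty

/-- `a₁* ⋯ a_d*` (given by the list `as`) is the minimal strict letter-bounded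
expression for `L_X(G)` -/
def MinimalLB (G : CFG N A) (X : N) (as : List A) : Prop :=
  Lang G X ⊆ letterLang as ∧ ∀ i < as.length, ¬ (Lang G X ⊆ letterLang (as.eraseIdx i))

/-- a symbol of `A ∪ {ε}` as a word -/
def optT (a : Option A) : Word N A := a.elim [] (fun x => [Sum.inr x])

/-- a symbol of `Ξ ∪ {ε}` as a word -/
def optN (y : Option N) : Word N A := y.elim [] (fun x => [Sum.inl x])

/-- `y ⇒^γ u_y` is a (possibly empty) `k`-index depth-first derivation, where
`y ∈ Ξ ∪ {ε}`; for `y = ε` the derivation is empty -/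
def optDFDer (H : CFG N A) (k : ℕ) (y : Option N) (γ : List (CProd N A)) : Prop :=
  match y with
  | some Y => ∃ w : List A, DFCtrlFrom H (k : ℕ∞) [Sum.inl Y] γ (tw w)
  | none => γ = []

/-- the grammar `G_k` with productions `X_i → X_{i-1} X_{i-1}` (1 ≤ i ≤ k) and `X_0 → a` -/
def Gk (k : ℕ) : CFG ℕ Unit :=
  ⟨{p | (∃ i, 1 ≤ i ∧ i ≤ k ∧ p = (i, [Sum.inl (i - 1), Sum.inl (i - 1)])) ∨
        p = (0, [Sum.inr ()])}⟩

end Paper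


namespace Paper

/-! ### Auxiliary development for the optimality lower bound -/

def pr (i : ℕ) : CProd ℕ Unit :=
  if i = 0 then (0, [Sum.inr ()]) else (i, [Sum.inl (i-1), Sum.inl (i-1)])

lemma pr_fst (i : ℕ) : (pr i).1 = i := by
  unfold pr; split <;> simp_all

lemma pr_inj {i j : ℕ} (h : pr i = pr j) : i = j := by
  have := congrArg Prod.fst h; rwa [pr_fst, pr_fst] at this

def wkk : ℕ → List (CProd ℕ Unit)
  | 0 => [pr 0]
  | (i+1) => pr (i+1) :: (wkk i ++ wkk i)

def cnt (a : CProd ℕ Unit) (l : List (CProd ℕ Unit)) : ℕ :=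
  l.countP (fun x => decide (x = a))

lemma cnt_append (a : CProd ℕ Unit) (l l' : List (CProd ℕ Unit)) :
    cnt a (l ++ l') = cnt a l + cnt a l' := List.countP_append

lemma cnt_pos {a : CProd ℕ Unit} {l : List (CProd ℕ Unit)} (h : a ∈ l) : 0 < cnt a l :=
  List.countP_pos_iff.2 ⟨a, h, by simp⟩

lemma cnt_le_of_infix {l l' : List (CProd ℕ Unit)} (a : CProd ℕ Unit) (h : l <:+: l') :
    cnt a l ≤ cnt a l' := h.sublist.countP_le

lemma wkk_length (i : ℕ) : (wkk i).length = 2^(i+1) - 1 := by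
  induction i with
  | zero => simp [wkk]
  | succ n ih =>
    have h1 : 1 ≤ 2^(n+1) := Nat.one_le_two_pow
    have h2 : 2^(n+1+1) = 2^(n+1) * 2 := pow_succ 2 (n+1)
    simp [wkk, ih]; omega

lemma cnt_wkk (j i : ℕ) :
    cnt (pr j) (wkk i) = if j ≤ i then 2^(i-j) else 0 := by
  induction i with
  | zero =>
    simp only [wkk, cnt, List.countP_cons, List.countP_nil, decide_eq_true_eq]
    by_cases h : j = 0
    · subst h; simp
    · rw [if_neg (fun h' => h (pr_inj h').symm), if_neg (by omega)]
  | succ n ih =>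
    simp only [wkk, cnt, List.countP_cons, List.countP_append, decide_eq_true_eq] at ih ⊢
    rw [ih]
    by_cases h : j = n + 1
    · subst h
      rw [if_neg (by omega), if_pos rfl, if_pos (le_refl _)]
      simp
    · rw [if_neg (fun h' => h (pr_inj h').symm)]
      by_cases h2 : j ≤ n
      · rw [if_pos h2, if_pos (by omega)]
        have : n + 1 - j = (n - j) + 1 := by omega
        rw [this, pow_succ]; ring
      · rw [if_neg h2, if_neg (by omega)]

lemma wkk_head (i : ℕ) : ∃ t, wkk i = pr i :: t := by
  cases i <;> simp [wkk]

lemma infix_of_W2 {α : Type} {m W : List α} {c : α} (hc : W[0]? = some c)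
    (hm : c ∉ m) (h : m <:+: W ++ W) : m <:+: W := by
  obtain ⟨x, y, hxy⟩ := h
  rcases le_or_gt (x.length + m.length) W.length with h1 | h1
  · have htake : (x ++ (m ++ y)).take (x.length + m.length)
        = (W ++ W).take (x.length + m.length) := by rw [← List.append_assoc, hxy]
    rw [List.take_append_of_le_length h1] at htake
    have hxm : x ++ m = W.take (x.length + m.length) := by
      rw [← htake, List.take_append]
      simp
    have : x ++ m <+: W := hxm ▸ List.take_prefix _ _
    obtain ⟨t, ht⟩ := this
    exact ⟨x, t, by rw [← ht, List.append_assoc]⟩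
  rcases le_or_gt W.length x.length with h2 | h2
  · have hdrop := congrArg (List.drop W.length) hxy
    rw [List.append_assoc, List.drop_append_of_le_length h2, List.drop_left] at hdrop
    exact ⟨x.drop W.length, y, by rw [List.append_assoc, hdrop]⟩
  · exfalso
    have hL : (W ++ W)[W.length]? = some c := by
      rw [List.getElem?_append_right (le_refl _)]
      simpa using hc
    have hR : (x ++ (m ++ y))[W.length]? = (m ++ y)[W.length - x.length]? := by
      rw [List.getElem?_append_right (le_of_lt h2)]
    have hlt : W.length - x.length < m.length := by omega
    rw [List.getElem?_append_left hlt] at hR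
    rw [← List.append_assoc, hxy, hL] at hR
    exact hm (List.mem_of_getElem? hR.symm)

lemma wkk_cubefree : ∀ i (e : List (CProd ℕ Unit)), e ≠ [] → ¬ (e ++ e ++ e) <:+: wkk i := by
  intro i
  induction i with
  | zero =>
    intro e he h
    have h1 := h.length_le
    have h2 : 1 ≤ e.length := List.length_pos_iff.2 he
    simp [wkk] at h1
    omega
  | succ n ih =>
    intro e he h
    classical
    have hcount : ∀ a : CProd ℕ Unit, a ∈ e → 3 ≤ cnt a (wkk (n+1)) := by
      intro a ha
      have h1 : 0 < cnt a e := cnt_pos ha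
      have h3 : 3 ≤ cnt a (e ++ e ++ e) := by
        simp [cnt_append]; omega
      exact le_trans h3 (cnt_le_of_infix a h)
    rcases Classical.em (pr (n+1) ∈ e) with hc1 | hc1
    · have hcc := hcount _ hc1
      rw [cnt_wkk] at hcc
      simp at hcc
    · rcases Classical.em (pr n ∈ e) with hc2 | hc2
      · have hcc := hcount _ hc2
        rw [cnt_wkk, if_pos (by omega)] at hcc
        have he2 : (2:ℕ)^(n+1-n) = 2 := by norm_num [show n+1-n = 1 by omega]
        omega
      · obtain ⟨s, t', hst⟩ := h
        have hmem3 : ∀ a ∈ e ++ e ++ e, a ∈ e := by intro a ha; simp at ha; tauto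
        cases s with
        | nil =>
          obtain ⟨a, e', rfl⟩ : ∃ a e', e = a :: e' := by
            cases e with | nil => exact absurd rfl he | cons a e' => exact ⟨a, e', rfl⟩
          simp [wkk] at hst
          exact hc1 (by rw [← hst.1]; simp)
        | cons c s' =>
          have hst' : s' ++ (e ++ e ++ e) ++ t' = wkk n ++ wkk n := by
            simp only [wkk, List.cons_append] at hst
            exact (List.cons_eq_cons.1 hst).2
          have hinf : (e ++ e ++ e) <:+: wkk n ++ wkk n := ⟨s', t', hst'⟩
          obtain ⟨tn, htn⟩ := wkk_head n
          have hget : (wkk n)[0]? = some (pr n) := by rw [htn]; rfl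
          have hnm : pr n ∉ e ++ e ++ e := fun hx => hc2 (hmem3 _ hx)
          exact ih e he (infix_of_W2 hget hnm hinf)

/-! ### Annotated nonterminal occurrences -/

def ntsF {N T : Type} : ((N ⊕ T) × ℕ) → Option (N × ℕ)
  | (Sum.inl x, o) => some (x, o)
  | (Sum.inr _, _) => none

def nts {N T : Type} (u : AWord N T) : List (N × ℕ) := u.filterMap ntsF

lemma mem_nts {N T : Type} {u : AWord N T} {x : N} {o : ℕ} :
    (x, o) ∈ nts u ↔ (Sum.inl x, o) ∈ u := by
  constructor
  · intro h
    obtain ⟨a, ha, hf⟩ := List.mem_filterMap.1 h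
    obtain ⟨s, o'⟩ := a
    cases s with
    | inl y =>
      simp only [ntsF, Option.some.injEq, Prod.mk.injEq] at hf
      obtain ⟨rfl, rfl⟩ := hf
      exact ha
    | inr t => simp [ntsF] at hf
  · intro h
    exact List.mem_filterMap.2 ⟨(Sum.inl x, o), h, rfl⟩

lemma nts_append {N T : Type} (u v : AWord N T) : nts (u ++ v) = nts u ++ nts v :=
  List.filterMap_append

lemma nts_nil_of_ntCountA {N T : Type} {u : AWord N T} (h : ntCountA u = 0) :
    nts u = [] := by
  rw [List.eq_nil_iff_forall_not_mem]
  rintro ⟨x, o⟩ hmem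
  have hu : (Sum.inl x, o) ∈ u := mem_nts.1 hmem
  have h1 : (Sum.inl x, o) ∈ u.filter (fun s => s.1.isLeft) :=
    List.mem_filter.2 ⟨hu, rfl⟩
  have h2 := List.length_pos_iff.2 (List.ne_nil_of_mem h1)
  unfold ntCountA at h; omega

lemma ntCountA_eq_ntCount {N T : Type} (u : AWord N T) :
    ntCountA u = ntCount (strip u) := by
  unfold ntCountA ntCount strip
  rw [List.filter_map, List.length_map]
  rfl

lemma strip_applyProdA {N T : Type} (p : CProd N T) (j m : ℕ) (u : AWord N T) :
    strip (applyProdA p j m u) = applyProd p j (strip u) := by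
  simp [strip, applyProdA, applyProd, List.map_take, List.map_drop, Function.comp_def]

lemma dfseq_kseq {N T : Type} {G : CFG N T} {κ : ℕ∞} {m : ℕ} {u v : AWord N T}
    {l : List (CProd N T × ℕ)} (h : DFSeq G κ m u l v) :
    KSeq G κ (strip u) l (strip v) := by
  induction h with
  | refl m u hc => exact KSeq.refl _ (by rwa [← ntCountA_eq_ntCount])
  | step hc hp hg hdf hrest ih =>
    exact KSeq.step (by rwa [← ntCountA_eq_ntCount]) hp
      (by rw [strip, List.getElem?_map, hg]; rfl)
      (by rwa [strip_applyProdA] at ih)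

lemma dfseq_append {N T : Type} {G : CFG N T} {κ : ℕ∞} :
    ∀ {l : List (CProd N T × ℕ)} {m : ℕ} {u v : AWord N T},
    DFSeq G κ m u l v → ∀ {l' : List (CProd N T × ℕ)} {z : AWord N T},
    DFSeq G κ (m + l.length) v l' z → DFSeq G κ m u (l ++ l') z := by
  intro l m u v h
  induction h with
  | refl m u hc => intro l' z h'; simpa using h'
  | @step m u v p j o rest hc hp hg hdf hrest ih =>
    intro l' z h'
    refine DFSeq.step hc hp hg hdf (ih ?_)
    have heq : m + ((p, j) :: rest).length = m + 1 + rest.length := by simp; omega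
    rwa [heq] at h'

lemma gk_shape {k : ℕ} {p : CProd ℕ Unit} (h : p ∈ (Gk k).prods) :
    p = pr p.1 ∧ p.1 ≤ k := by
  rcases h with ⟨i, hi1, hik, rfl⟩ | rfl
  · refine ⟨?_, hik⟩
    simp only [pr]
    rw [if_neg (by omega)]
  · exact ⟨by simp [pr], Nat.zero_le k⟩

lemma gk_det {k : ℕ} {p q : CProd ℕ Unit} (hp : p ∈ (Gk k).prods)
    (hq : q ∈ (Gk k).prods) (h : p.1 = q.1) : p = q := by
  rw [(gk_shape hp).1, (gk_shape hq).1, h]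

lemma pr_mem {k i : ℕ} (h : i ≤ k) : pr i ∈ (Gk k).prods := by
  cases i with
  | zero => exact Or.inr (by simp [pr])
  | succ n => exact Or.inl ⟨n+1, by omega, h, by simp [pr]⟩

lemma nts_rhs (i m : ℕ) :
    nts ((pr i).2.map (fun s => (s, m)))
      = if i = 0 then [] else [(i-1, m), (i-1, m)] := by
  unfold pr
  split <;> rfl

lemma split_at {N T : Type} {u : AWord N T} {j : ℕ} {c : (N ⊕ T) × ℕ}
    (h : u[j]? = some c) : u = u.take j ++ [c] ++ u.drop (j+1) := by
  have hj : j < u.length := by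
    by_contra hj
    rw [List.getElem?_eq_none_iff.2 (by omega)] at h
    simp at h
  have hc : u[j] = c := by
    have h2 := h
    rw [List.getElem?_eq_getElem hj] at h2
    exact Option.some.inj h2
  conv_lhs => rw [← List.take_append_drop j u, List.drop_eq_getElem_cons hj]
  rw [hc]; simp

lemma nts_apply_split {N T : Type} {u : AWord N T} {j : ℕ} {x : N} {o : ℕ}
    (h : u[j]? = some (Sum.inl x, o)) (p : CProd N T) (m : ℕ) :
    ((nts u : List (N × ℕ)) : Multiset (N × ℕ))
        = ↑(nts (u.take j)) + {(x, o)} + ↑(nts (u.drop (j+1)))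
    ∧ ((nts (applyProdA p j m u) : List (N × ℕ)) : Multiset (N × ℕ))
        = ↑(nts (u.take j)) + ↑(nts (p.2.map (fun s => (s, m)))) + ↑(nts (u.drop (j+1))) := by
  constructor
  · conv_lhs => rw [split_at h]
    rw [nts_append, nts_append]
    rw [← Multiset.coe_add, ← Multiset.coe_add]
    congr 1
  · rw [applyProdA, nts_append, nts_append, ← Multiset.coe_add, ← Multiset.coe_add]

def GoodA (m : ℕ) (u : AWord ℕ Unit) : Prop :=
  (∀ q ∈ nts u, q.2 ≤ m) ∧ ∀ q ∈ nts u, ∀ q' ∈ nts u, q.2 = q'.2 → q.1 = q'.1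

lemma mem_nts_apply {N T : Type} {p : CProd N T} {j m : ℕ} {u : AWord N T} {q : N × ℕ}
    (hq : q ∈ nts (applyProdA p j m u)) :
    q ∈ nts u ∨ q ∈ nts (p.2.map (fun s => (s, m))) := by
  rw [applyProdA, nts_append, nts_append] at hq
  rcases List.mem_append.1 hq with hq1 | hq2
  · rcases List.mem_append.1 hq1 with hq3 | hq4
    · exact Or.inl (((List.take_sublist j u).filterMap ntsF).subset hq3)
    · exact Or.inr hq4
  · exact Or.inl (((List.drop_sublist (j+1) u).filterMap ntsF).subset hq2)

lemma mem_nts_map_snd {N T : Type} {l : Word N T} {m : ℕ} {q : N × ℕ}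
    (hq : q ∈ nts (l.map (fun s => (s, m)))) : q.2 = m := by
  obtain ⟨a, ha, hf⟩ := List.mem_filterMap.1 hq
  obtain ⟨s, hs, rfl⟩ := List.mem_map.1 ha
  cases s with
  | inl y =>
    simp only [ntsF, Option.some.injEq] at hf
    rw [← hf]
  | inr t => simp [ntsF] at hf

lemma mem_nts_rhs {i m : ℕ} {q : ℕ × ℕ}
    (hq : q ∈ nts ((pr i).2.map (fun s => (s, m)))) : q = (i-1, m) := by
  rw [nts_rhs] at hq
  split at hq
  · simp at hq
  · simpa using hq

lemma good_step {k m : ℕ} {u : AWord ℕ Unit} {p : CProd ℕ Unit} {j : ℕ}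
    (hp : p ∈ (Gk k).prods) (hgood : GoodA m u) :
    GoodA (m+1) (applyProdA p j (m+1) u) := by
  have hpr : p = pr p.1 := (gk_shape hp).1
  constructor
  · intro q hq
    rcases mem_nts_apply hq with h | h
    · exact le_trans (hgood.1 q h) (Nat.le_succ m)
    · rw [mem_nts_map_snd h]
  · intro q hq q' hq' he
    rcases mem_nts_apply hq with h | h <;> rcases mem_nts_apply hq' with h' | h'
    · exact hgood.2 q h q' h' he
    · exfalso
      have := hgood.1 q h
      have h2 : q'.2 = m + 1 := mem_nts_map_snd h'
      omega
    · exfalso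
      have := hgood.1 q' h'
      have h2 : q.2 = m + 1 := mem_nts_map_snd h
      omega
    · rw [hpr] at h h'
      rw [mem_nts_rhs h, mem_nts_rhs h']

lemma uniq {k : ℕ} : ∀ (l₁ : List (CProd ℕ Unit × ℕ)) {κ₁ κ₂ : ℕ∞} {m : ℕ}
    {u₁ u₂ v₁ v₂ : AWord ℕ Unit} {l₂ : List (CProd ℕ Unit × ℕ)},
    DFSeq (Gk k) κ₁ m u₁ l₁ v₁ → DFSeq (Gk k) κ₂ m u₂ l₂ v₂ →
    ntCountA v₁ = 0 → ntCountA v₂ = 0 →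
    GoodA m u₁ → GoodA m u₂ →
    ((nts u₁ : List (ℕ × ℕ)) : Multiset (ℕ × ℕ)) = ((nts u₂ : List (ℕ × ℕ)) : Multiset (ℕ × ℕ)) →
    l₁.map Prod.fst = l₂.map Prod.fst := by
  intro l₁
  induction l₁ with
  | nil =>
    intro κ₁ κ₂ m u₁ u₂ v₁ v₂ l₂ h1 h2 hv1 hv2 g1 g2 hperm
    cases h1 with
    | refl _ _ =>
      have h01 : nts u₁ = [] := nts_nil_of_ntCountA hv1
      have h02 : nts u₂ = [] := by
        have hz : ((nts u₂ : List (ℕ × ℕ)) : Multiset (ℕ × ℕ)) = 0 := by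
          rw [← hperm, h01]; rfl
        exact (Multiset.coe_eq_zero _).1 hz
      cases h2 with
      | refl => rfl
      | step hc2 hp2 hg2 hdf2 hrest2 =>
        exfalso
        have hmem := mem_nts.2 (List.mem_of_getElem? hg2)
        rw [h02] at hmem
        exact List.not_mem_nil hmem
  | cons pj rest ih =>
    intro κ₁ κ₂ m u₁ u₂ v₁ v₂ l₂ h1 h2 hv1 hv2 g1 g2 hperm
    obtain ⟨p₁, j₁⟩ := pj
    cases h1 with
    | @step _ _ _ _ _ o₁ _ hc1 hp1 hg1 hdf1 hrest1 =>
    have hmax1 : ∀ q ∈ nts u₁, q.2 ≤ o₁ := by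
      rintro ⟨x, o⟩ hq
      obtain ⟨iq, hiq⟩ := List.getElem?_of_mem (mem_nts.1 hq)
      exact hdf1 iq x o hiq _ o₁ hg1
    have hmem1 : (p₁.1, o₁) ∈ nts u₁ := mem_nts.2 (List.mem_of_getElem? hg1)
    have htrans : ∀ q : ℕ × ℕ, q ∈ nts u₁ ↔ q ∈ nts u₂ := by
      intro q
      rw [← Multiset.mem_coe, ← Multiset.mem_coe, hperm]
    cases h2 with
    | refl _ _ =>
      exfalso
      have h02 : nts u₂ = [] := nts_nil_of_ntCountA hv2
      have := (htrans _).1 hmem1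
      rw [h02] at this
      exact List.not_mem_nil this
    | @step _ _ _ p₂ j₂ o₂ rest₂ hc2 hp2 hg2 hdf2 hrest2 =>
      have hmax2 : ∀ q ∈ nts u₂, q.2 ≤ o₂ := by
        rintro ⟨x, o⟩ hq
        obtain ⟨iq, hiq⟩ := List.getElem?_of_mem (mem_nts.1 hq)
        exact hdf2 iq x o hiq _ o₂ hg2
      have hmem2 : (p₂.1, o₂) ∈ nts u₂ := mem_nts.2 (List.mem_of_getElem? hg2)
      have ho : o₁ = o₂ :=
        le_antisymm (hmax2 _ ((htrans _).1 hmem1)) (hmax1 _ ((htrans _).2 hmem2))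
      have hpp : p₁.1 = p₂.1 :=
        g2.2 _ ((htrans _).1 hmem1) _ hmem2 ho
      have hp : p₁ = p₂ := gk_det hp1 hp2 hpp
      subst hp
      subst ho
      obtain ⟨e1a, e1b⟩ := nts_apply_split hg1 p₁ (m+1)
      obtain ⟨e2a, e2b⟩ := nts_apply_split hg2 p₁ (m+1)
      have hcancel : ((nts (u₁.take j₁) : List (ℕ×ℕ)) : Multiset (ℕ×ℕ)) + ↑(nts (u₁.drop (j₁+1)))
          = ((nts (u₂.take j₂) : List (ℕ×ℕ)) : Multiset (ℕ×ℕ)) + ↑(nts (u₂.drop (j₂+1))) := by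
        have h0 : ((nts (u₁.take j₁) : List (ℕ×ℕ)) : Multiset (ℕ×ℕ)) + {(p₁.1, o₁)} + ↑(nts (u₁.drop (j₁+1)))
            = ↑(nts (u₂.take j₂)) + {(p₁.1, o₁)} + ↑(nts (u₂.drop (j₂+1))) := by
          rw [← e1a, ← e2a, hperm]
        have h2' : ({(p₁.1, o₁)} : Multiset (ℕ×ℕ)) + (↑(nts (u₁.take j₁)) + ↑(nts (u₁.drop (j₁+1))))
            = {(p₁.1, o₁)} + (↑(nts (u₂.take j₂)) + ↑(nts (u₂.drop (j₂+1)))) := by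
          calc ({(p₁.1, o₁)} : Multiset (ℕ×ℕ)) + (↑(nts (u₁.take j₁)) + ↑(nts (u₁.drop (j₁+1))))
              = ↑(nts (u₁.take j₁)) + {(p₁.1, o₁)} + ↑(nts (u₁.drop (j₁+1))) := by abel
            _ = ↑(nts (u₂.take j₂)) + {(p₁.1, o₁)} + ↑(nts (u₂.drop (j₂+1))) := h0
            _ = {(p₁.1, o₁)} + (↑(nts (u₂.take j₂)) + ↑(nts (u₂.drop (j₂+1)))) := by abel
        exact add_left_cancel h2'
      have hnew : ((nts (applyProdA p₁ j₁ (m+1) u₁) : List (ℕ×ℕ)) : Multiset (ℕ×ℕ))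
          = ↑(nts (applyProdA p₁ j₂ (m+1) u₂)) := by
        rw [e1b, e2b]
        set R : Multiset (ℕ×ℕ) := ↑(nts (p₁.2.map (fun s => (s, m+1)))) with hR
        calc (↑(nts (u₁.take j₁)) : Multiset (ℕ×ℕ)) + R + ↑(nts (u₁.drop (j₁+1)))
            = (↑(nts (u₁.take j₁)) + ↑(nts (u₁.drop (j₁+1)))) + R := by abel
          _ = (↑(nts (u₂.take j₂)) + ↑(nts (u₂.drop (j₂+1)))) + R := by rw [hcancel]
          _ = ↑(nts (u₂.take j₂)) + R + ↑(nts (u₂.drop (j₂+1))) := by abel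
      have hrec := ih hrest1 hrest2 hv1 hv2 (good_step hp1 g1) (good_step hp2 g2) hnew
      simp only [List.map_cons, hrec]
  
lemma get_mid {N T : Type} (A R : AWord N T) (c : (N ⊕ T) × ℕ) :
    (A ++ [c] ++ R)[A.length]? = some c := by
  rw [List.append_assoc, List.getElem?_append_right (le_refl _)]
  simp

lemma apply_mid {N T : Type} (p : CProd N T) (m : ℕ) (A R : AWord N T)
    (c : (N ⊕ T) × ℕ) :
    applyProdA p A.length m (A ++ [c] ++ R) = A ++ p.2.map (fun s => (s, m)) ++ R := by
  unfold applyProdA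
  congr 1
  · congr 1
    rw [List.append_assoc]
    exact List.take_left
  · rw [show A.length + 1 = (A ++ [c]).length by simp]
    exact List.drop_left

lemma dfok_mid {N T : Type} {A R : AWord N T} {x : N} {mo : ℕ}
    (hA : ∀ s ∈ A, (s.1).isRight) (hR : ∀ q ∈ nts R, q.2 ≤ mo) :
    dfOK (A ++ [(Sum.inl x, mo)] ++ R) A.length := by
  intro i y o hget s oj hj
  rw [get_mid] at hj
  obtain ⟨rfl, rfl⟩ : Sum.inl x = s ∧ mo = oj := by
    have := Option.some.inj hj
    exact ⟨congrArg Prod.fst this, congrArg Prod.snd this⟩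
  have hm := List.mem_of_getElem? hget
  rcases List.mem_append.1 hm with hm1 | hm2
  · rcases List.mem_append.1 hm1 with hm3 | hm4
    · have := hA _ hm3
      simp at this
    · simp at hm4
      omega
  · exact hR (y, o) (mem_nts.2 hm2)

lemma can {k : ℕ} : ∀ i, i ≤ k → ∀ (m mo : ℕ) (A R : AWord ℕ Unit),
    mo ≤ m → (∀ s ∈ A, (s.1).isRight) → (∀ q ∈ nts R, q.2 ≤ mo) →
    ∃ (l : List (CProd ℕ Unit × ℕ)) (B : AWord ℕ Unit),
      l.map Prod.fst = wkk i ∧ (∀ s ∈ B, (s.1).isRight) ∧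
      DFSeq (Gk k) ⊤ m (A ++ [(Sum.inl i, mo)] ++ R) l (A ++ B ++ R) := by
  intro i
  induction i with
  | zero =>
    intro _ m mo A R hmo hA hR
    refine ⟨[(pr 0, A.length)], [(Sum.inr (), m+1)], by simp [wkk], by simp, ?_⟩
    refine DFSeq.step (o := mo) le_top (pr_mem (Nat.zero_le k)) ?_ (dfok_mid hA hR) ?_
    · rw [pr_fst]; exact get_mid A R _
    · rw [apply_mid]
      exact DFSeq.refl _ _ le_top
  | succ n ihc =>
    intro hik m mo A R hmo hA hR
    have hnk : n ≤ k := by omega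
    obtain ⟨l₁, B₁, hl₁, hB₁, hd₁⟩ := ihc hnk (m+1) (m+1) A ((Sum.inl n, m+1) :: R)
      (le_refl _) hA (by
        intro q hq
        have : nts ((Sum.inl n, m+1) :: (R : AWord ℕ Unit)) = (n, m+1) :: nts R := rfl
        rw [this] at hq
        rcases hq with _ | hq
        · exact le_refl _
        · exact le_trans (hR q (by assumption)) (by omega))
    obtain ⟨l₂, B₂, hl₂, hB₂, hd₂⟩ := ihc hnk (m+1+l₁.length) (m+1) (A ++ B₁) R
      (Nat.le_add_right _ _)
      (by
        intro s hs
        rcases List.mem_append.1 hs with h | h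
        · exact hA s h
        · exact hB₁ s h)
      (fun q hq => le_trans (hR q hq) (by omega))
    refine ⟨(pr (n+1), A.length) :: (l₁ ++ l₂), B₁ ++ B₂, ?_, ?_, ?_⟩
    · simp [wkk, hl₁, hl₂]
    · intro s hs
      rcases List.mem_append.1 hs with h | h
      · exact hB₁ s h
      · exact hB₂ s h
    · refine DFSeq.step (o := mo) le_top (pr_mem hik) ?_ (dfok_mid hA hR) ?_
      · rw [pr_fst]; exact get_mid A R _
      · rw [apply_mid]
        have hw : A ++ ((pr (n+1)).2.map (fun s => (s, m+1))) ++ R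
            = A ++ [(Sum.inl n, m+1)] ++ ((Sum.inl n, m+1) :: R) := by
          simp [pr]
        rw [hw]
        have hd₂' : DFSeq (Gk k) ⊤ (m+1+l₁.length) (A ++ B₁ ++ ((Sum.inl n, m+1) :: R)) l₂
            ((A ++ B₁) ++ B₂ ++ R) := by
          have hmid : A ++ B₁ ++ ((Sum.inl n, m+1) :: R)
              = (A ++ B₁) ++ [(Sum.inl n, m+1)] ++ R := by simp
          rw [hmid]
          exact hd₂
        have := dfseq_append hd₁ hd₂'
        have hfin : (A ++ B₁) ++ B₂ ++ R = A ++ (B₁ ++ B₂) ++ R := by simp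
        rwa [hfin] at this

lemma zip_map_fst_snd {α β : Type*} (l : List (α × β)) :
    (l.map Prod.fst).zip (l.map Prod.snd) = l := by
  induction l with
  | nil => rfl
  | cons a l ih => simp [ih]

lemma blang_len {α : Type} : ∀ (ws : List (List α)), (∀ e ∈ ws, e ≠ []) →
    ∀ u ∈ BLang ws, (∀ e : List α, e ≠ [] → ¬ (e ++ e ++ e) <:+: u) →
    u.length ≤ 2 * (ws.map List.length).sum := by
  intro ws
  induction ws with
  | nil =>
    intro _ u hu _
    rw [show u = [] from hu]
    simp
  | cons w ws ih =>
    intro hne u hu hcube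
    obtain ⟨n, v, hv, rfl⟩ := hu
    have hv3 : ∀ e : List α, e ≠ [] → ¬ (e ++ e ++ e) <:+: v := by
      intro e he hc
      exact hcube e he (hc.trans ⟨(List.replicate n w).flatten, [], by simp⟩)
    have hn : n ≤ 2 := by
      by_contra hn
      obtain ⟨t, rfl⟩ := Nat.exists_eq_add_of_le (show 3 ≤ n by omega)
      apply hcube w (hne w (by simp)) 
      refine ⟨[], (List.replicate t w).flatten ++ v, ?_⟩
      have hrep : (List.replicate (3+t) w).flatten = w ++ (w ++ (w ++ (List.replicate t w).flatten)) := by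
        rw [List.replicate_add]
        simp
      rw [hrep]
      simp [List.append_assoc]
    have hlen : ((List.replicate n w).flatten ++ v).length = n * w.length + v.length := by
      simp [List.length_flatten]
    have hih := ih (fun e he => hne e (by simp [he])) v hv hv3
    have hnw : n * w.length ≤ 2 * w.length := Nat.mul_le_mul_right _ hn
    rw [hlen]
    simp only [List.map_cons, List.sum_cons, Nat.mul_add]
    exact Nat.add_le_add hnw hih

end Paper

namespace Paper

/-- Lemma 4, optimality: for `k > 0` and the grammar `G_k`, every
bounded expression `Γ = γ₁* ⋯ γ_n*` over `Δ_k` with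
`L_{X_k}(G_k) = L̂_{X_k}(Γ ∩ Γ^{df(k+1)}_{X_k}(G_k), G_k)` has size
`Σᵢ |γᵢ| ≥ 2^{k-1}`. -/
theorem optimality_lower_bound (k : ℕ) (hk : 0 < k)
    (E : List (List (CProd ℕ Unit))) (hE : IsBExpr E)
    (hcover : Lang (Gk k) k = LHat (Gk k) (BLang E ∩ GammaDF (Gk k) (k + 1) k none) k none) :
    2 ^ (k - 1) ≤ (E.map List.length).sum := by
  classical
  -- canonical depth-first derivation from X_k
  obtain ⟨l, B, hl, hB, hd⟩ := can (k := k) k (le_refl k) 0 0 [] []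
    (le_refl 0) (by simp) (by simp [nts, ntsF])
  simp only [List.nil_append, List.append_nil] at hd
  -- it witnesses that the language is nonempty
  have hK : KSeq (Gk k) ⊤ [Sum.inl k] l (strip B) := by
    have h0 := dfseq_kseq hd
    simpa [strip] using h0
  have hBr : strip B = tw (List.replicate B.length ()) := by
    rw [tw, List.map_replicate]
    refine List.eq_replicate_iff.2 ⟨by simp [strip], ?_⟩
    intro b hb
    obtain ⟨s, hs, rfl⟩ := List.mem_map.1 hb
    have hright := hB s hs
    obtain ⟨sv, so⟩ := s
    cases sv with
    | inl x => simp at hright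
    | inr t => rfl
  have hsent : sent (List.replicate B.length ()) (none : Option ℕ) [] = strip B := by
    rw [hBr]
    simp [sent, tw]
  have hwLang : List.replicate B.length () ∈ Lang (Gk k) k := by
    refine ⟨List.replicate B.length (), [], l.map Prod.fst, by simp, ?_⟩
    refine ⟨l.map Prod.snd, by simp, ?_⟩
    rw [zip_map_fst_snd, hsent]
    exact hK
  -- extract a control word from the bounded expression
  rw [hcover] at hwLang
  obtain ⟨u, v, hw, γ, hγ, hct⟩ := hwLang
  obtain ⟨u', v', hDFC⟩ := hγ.2
  obtain ⟨js, va, hlen, hDF, hstrip⟩ := hDFC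
  -- the control word of a complete depth-first derivation is unique
  have hva : ntCountA va = 0 := by
    rw [ntCountA_eq_ntCount, hstrip]
    simp [sent, ntCount, tw, List.filter_append, List.filter_map]
  have hBnt : ntCountA B = 0 := by
    unfold ntCountA
    rw [List.length_eq_zero_iff, List.filter_eq_nil_iff]
    intro a ha
    have := hB a ha
    obtain ⟨sv, so⟩ := a
    cases sv with
    | inl x => simp at this
    | inr t => simp
  have hGood : GoodA 0 [(Sum.inl k, 0)] := by
    constructor
    · rintro ⟨x, o⟩ hq
      have := mem_nts.1 hq
      simp at this
      omega
    · rintro ⟨x, o⟩ hq ⟨x', o'⟩ hq' _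
      have h1 := mem_nts.1 hq
      have h2 := mem_nts.1 hq'
      simp at h1 h2
      simp [h1.1, h2.1]
  have hDF' : DFSeq (Gk k) ((k : ℕ∞) + 1) 0 [(Sum.inl k, 0)] (γ.zip js) va := by
    simpa [annot] using hDF
  have huniq : (γ.zip js).map Prod.fst = l.map Prod.fst :=
    uniq (γ.zip js) hDF' hd hva hBnt hGood hGood rfl
  have hγwk : γ = wkk k := by
    rw [← List.map_fst_zip (l₁ := γ) (l₂ := js) (by omega), huniq, hl]
  -- the bounded expression must spell out w_k, which is cube-free
  have hcf : ∀ e : List (CProd ℕ Unit), e ≠ [] → ¬ (e ++ e ++ e) <:+: wkk k :=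
    wkk_cubefree k
  have hlen2 : (wkk k).length ≤ 2 * (E.map List.length).sum :=
    blang_len E hE (wkk k) (hγwk ▸ hγ.1) hcf
  have hwl := wkk_length k
  have h1 : 1 ≤ 2^k := Nat.one_le_two_pow
  have h2 : (2:ℕ)^(k+1) = 2^k * 2 := pow_succ 2 k
  have h3 : (2:ℕ)^(k-1) ≤ 2^k := Nat.pow_le_pow_right (by norm_num) (Nat.sub_le k 1)
  omega

end Paper
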